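/- Let γ: [0,1] → ℂ ∖ {0} be an affine segment, γ(t) = (1−t)z₀ + t z₁ with z₀, z₁ ∈ ℂ and 0 not on the segment. Then ∫_γ |Im(dz/z)| = ∫₀¹ |Im(γ'(t)/γ(t))| dt ≤ π. -/

import Mathlib

/-- the total angular variation of an affine segment avoiding
the origin, seen from the origin, is at most `π`:
`∫₀¹ |Im(γ'(t)/γ(t))| dt ≤ π` for `γ(t) = (1−t)z₀ + t z₁ ≠ 0`. -/
theorem angular_variation_of_segment_le_pi (z₀ z₁ : ℂ)
    (h : ∀ t ∈ Set.Icc (0 : ℝ) 1, (1 - (t : ℂ)) * z₀ + (t : ℂ) * z₁ ≠ 0) :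
    (∫ t in (0 : ℝ)..1,
        |((z₁ - z₀) / ((1 - (t : ℂ)) * z₀ + (t : ℂ) * z₁)).im|)
      ≤ Real.pi := by
  obtain ⟨a, ha⟩ : ∃ a, z₀.re = a := ⟨_, rfl⟩
  obtain ⟨b, hb⟩ : ∃ b, z₀.im = b := ⟨_, rfl⟩
  obtain ⟨p, hp⟩ : ∃ p, z₁.re - a = p := ⟨_, rfl⟩
  obtain ⟨q, hq⟩ : ∃ q, z₁.im - b = q := ⟨_, rfl⟩
  obtain ⟨c, hc_def⟩ : ∃ c, q * a - p * b = c := ⟨_, rfl⟩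
  have hre : ∀ t : ℝ, ((1 - (t:ℂ)) * z₀ + (t:ℂ) * z₁).re = a + t * p := by
    intro t
    simp [Complex.add_re, Complex.mul_re, Complex.sub_re, Complex.sub_im,
      Complex.one_re, Complex.one_im, ← ha, ← hb, ← hp, ← hq]
    ring
  have him : ∀ t : ℝ, ((1 - (t:ℂ)) * z₀ + (t:ℂ) * z₁).im = b + t * q := by
    intro t
    simp [Complex.add_im, Complex.mul_im, Complex.sub_re, Complex.sub_im,
      Complex.one_re, Complex.one_im, ← ha, ← hb, ← hp, ← hq]
    ring
  have hnormSq : ∀ t : ℝ, Complex.normSq ((1 - (t:ℂ)) * z₀ + (t:ℂ) * z₁)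
      = (a + t*p)^2 + (b + t*q)^2 := by
    intro t; rw [Complex.normSq_apply, hre, him]; ring
  have hIm : ∀ t : ℝ, ((z₁ - z₀) / ((1 - (t:ℂ)) * z₀ + (t:ℂ) * z₁)).im
      = c / ((a + t*p)^2 + (b + t*q)^2) := by
    intro t
    rw [Complex.div_im, hre, him, hnormSq, div_sub_div_same]
    congr 1
    rw [Complex.sub_im, Complex.sub_re, ha, hb, hp, hq, ← hc_def]
    ring
  by_cases hc : c = 0
  · have : ∀ t ∈ Set.uIcc (0:ℝ) 1, |((z₁ - z₀) / ((1 - (t:ℂ)) * z₀ + (t:ℂ) * z₁)).im| = 0 := by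
      intro t _
      rw [hIm t, hc]
      simp
    rw [intervalIntegral.integral_congr this]
    simp [Real.pi_pos.le]
  · -- c ≠ 0
    obtain ⟨k, hk_def⟩ : ∃ k, p^2 + q^2 = k := ⟨_, rfl⟩
    obtain ⟨m, hm_def⟩ : ∃ m, a*p + b*q = m := ⟨_, rfl⟩
    have hk : 0 < k := by
      rcases lt_or_eq_of_le (by nlinarith [sq_nonneg p, sq_nonneg q] : (0:ℝ) ≤ k) with h' | h'
      · exact h'
      · exfalso
        have hp0 : p = 0 := by nlinarith [sq_nonneg p, sq_nonneg q]
        have hq0 : q = 0 := by nlinarith [sq_nonneg p, sq_nonneg q]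
        exact hc (by rw [← hc_def, hp0, hq0]; ring)
    have key : ∀ t : ℝ, k * ((a + t*p)^2 + (b + t*q)^2) = (k*t + m)^2 + c^2 := by
      intro t
      rw [← hk_def, ← hm_def, ← hc_def]
      ring
    have hcabs : 0 < |c| := abs_pos.mpr hc
    have hNpos : ∀ t : ℝ, 0 < (a + t*p)^2 + (b + t*q)^2 := by
      intro t
      nlinarith [key t, sq_nonneg (k*t + m), (by positivity : (0:ℝ) < c^2)]
    have hderiv : ∀ t : ℝ, HasDerivAt (fun t => Real.arctan ((k*t + m)/|c|))
        (|c| / ((a + t*p)^2 + (b + t*q)^2)) t := by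
      intro t
      have hg : HasDerivAt (fun t : ℝ => (k*t + m)/|c|) (k/|c|) t := by
        have : HasDerivAt (fun t : ℝ => k*t + m) k t := by
          simpa using ((hasDerivAt_id t).const_mul k).add_const m
        simpa using this.div_const |c|
      have hcomp := (Real.hasDerivAt_arctan ((k*t + m)/|c|)).comp t hg
      refine hcomp.congr_deriv ?_
      have habs2 : |c|^2 = c^2 := sq_abs c
      have h2 : |c|^2 + (k*t+m)^2 = k * ((a + t*p)^2 + (b + t*q)^2) := by
        rw [habs2]; linarith [key t]
      have e : 1/(1+((k*t+m)/|c|)^2)*(k/|c|) = k*|c|/(|c|^2+(k*t+m)^2) := by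
        rw [div_mul_div_comm, one_mul]
        rw [div_eq_div_iff (by positivity) (by positivity)]
        field_simp
      rw [e, h2, mul_div_mul_left _ _ hk.ne']
    have hcong : ∀ t ∈ Set.uIcc (0:ℝ) 1,
        |((z₁ - z₀) / ((1 - (t:ℂ)) * z₀ + (t:ℂ) * z₁)).im|
          = |c| / ((a + t*p)^2 + (b + t*q)^2) := by
      intro t _
      rw [hIm t, abs_div, abs_of_pos (hNpos t)]
    rw [intervalIntegral.integral_congr hcong]
    have hcont : Continuous fun t : ℝ => |c| / ((a + t*p)^2 + (b + t*q)^2) := by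
      apply continuous_const.div
      · fun_prop
      · exact fun t => ne_of_gt (hNpos t)
    rw [intervalIntegral.integral_eq_sub_of_hasDerivAt (fun t _ => hderiv t)
      (hcont.intervalIntegrable 0 1)]
    have h1 := Real.arctan_lt_pi_div_two ((k*(1:ℝ) + m)/|c|)
    have h2 := Real.neg_pi_div_two_lt_arctan ((k*(0:ℝ) + m)/|c|)
    linarith
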